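/- Let n ≥ 2 be an integer. There exist constants δ₀ ∈ (0,1) and C > 0, both depending only on n, with the following property. Let r₀ > 0, δ ∈ (0,δ₀], and let Ω ⊂ ℝⁿ be a bounded open set that is (δ,r₀)-Reifenberg flat. Let ε ∈ (0,1), R ∈ (0, r₀/20], and let V ⊆ W ⊆ Ω be Lebesgue measurable sets such that L^n(V) ≤ ε L^n(B_R(0)), and such that for every ξ ∈ Ω and every ρ ∈ (0,R], if L^n(V ∩ B_ρ(ξ)) > ε L^n(B_ρ(ξ)) then Ω ∩ B_ρ(ξ) ⊆ W. Then L^n(V) ≤ C ε L^n(W). (Vitali-type covering lemma on Reifenberg flat domains.) -/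

import Mathlib

open MeasureTheory RealInnerProductSpace

/-- A bounded open set `Ω ⊆ ℝⁿ` is `(δ, r₀)`-Reifenberg flat: near each boundary point,
at each scale `ρ ≤ r₀`, the boundary is trapped between two parallel hyperplanes at
distance `δρ`. -/
def ReifenbergFlat {n : ℕ} (Ω : Set (EuclideanSpace ℝ (Fin n))) (δ r₀ : ℝ) : Prop :=
  ∀ ξ₀ ∈ frontier Ω, ∀ ρ ∈ Set.Ioc (0 : ℝ) r₀,
    ∃ ν : EuclideanSpace ℝ (Fin n), ‖ν‖ = 1 ∧
      {x ∈ Metric.ball ξ₀ ρ | δ * ρ < ⟪x - ξ₀, ν⟫} ⊆ Ω ∩ Metric.ball ξ₀ ρ ∧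
      Ω ∩ Metric.ball ξ₀ ρ ⊆ {x ∈ Metric.ball ξ₀ ρ | -(δ * ρ) < ⟪x - ξ₀, ν⟫}

open Metric in
lemma reifenberg_lower {n : ℕ} {Ω : Set (EuclideanSpace ℝ (Fin n))} {δ r₀ : ℝ}
    (hΩ : IsOpen Ω) (hRF : ReifenbergFlat Ω δ r₀) (hδ : δ ≤ 1/16)
    {x : EuclideanSpace ℝ (Fin n)} (hx : x ∈ Ω) {ρ : ℝ} (hρ : 0 < ρ) (h2ρ : 2 * ρ ≤ r₀) :
    ENNReal.ofReal ((3/8 : ℝ)^n) * volume (ball (0 : EuclideanSpace ℝ (Fin n)) ρ)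
      ≤ volume (Ω ∩ ball x ρ) := by
  by_cases hsub : ball x ρ ⊆ Ω
  · rw [Set.inter_eq_self_of_subset_right hsub, Measure.addHaar_ball_center volume x ρ]
    calc ENNReal.ofReal ((3/8 : ℝ)^n) * volume (ball (0 : EuclideanSpace ℝ (Fin n)) ρ)
        ≤ 1 * volume (ball (0 : EuclideanSpace ℝ (Fin n)) ρ) := by
          gcongr
          exact ENNReal.ofReal_le_one.mpr (pow_le_one₀ (by norm_num) (by norm_num))
      _ = _ := one_mul _
  · obtain ⟨y, hyb, hyΩ⟩ : ∃ y, y ∈ ball x ρ ∧ y ∉ Ω := by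
      rcases Set.not_subset.1 hsub with ⟨y, hy1, hy2⟩; exact ⟨y, hy1, hy2⟩
    have hclosed : IsClosed Ωᶜ := hΩ.isClosed_compl
    obtain ⟨ξ₀, hξ₀c, hξ₀d⟩ := hclosed.exists_infDist_eq_dist ⟨y, hyΩ⟩ x
    have hdlt : Metric.infDist x Ωᶜ < ρ :=
      lt_of_le_of_lt (Metric.infDist_le_dist_of_mem hyΩ) (mem_ball'.1 hyb)
    have hdpos : 0 < Metric.infDist x Ωᶜ := by
      rw [hξ₀d]
      exact dist_pos.2 (fun h => hξ₀c (h ▸ hx))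
    have hin : ball x (Metric.infDist x Ωᶜ) ⊆ Ω := by
      intro z hz
      by_contra hzc
      exact absurd (Metric.infDist_le_dist_of_mem (Set.mem_compl hzc))
        (not_le.2 (by rw [dist_comm]; exact mem_ball.1 hz))
    have hfr : ξ₀ ∈ frontier Ω := by
      rw [hΩ.frontier_eq]
      refine ⟨?_, hξ₀c⟩
      have h2 : ξ₀ ∈ closedBall x (Metric.infDist x Ωᶜ) := by
        rw [mem_closedBall, dist_comm, ← hξ₀d]
      rw [← closure_ball x hdpos.ne'] at h2
      exact closure_mono hin h2
    have hdx : dist x ξ₀ < ρ := by rw [← hξ₀d]; exact hdlt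
    obtain ⟨ν, hν, hsub1, hsub2⟩ := hRF ξ₀ hfr (2 * ρ) ⟨by linarith, h2ρ⟩
    have hxb : x ∈ Ω ∩ ball ξ₀ (2 * ρ) := ⟨hx, by rw [mem_ball]; linarith⟩
    have hx_inner : -(δ * (2 * ρ)) < ⟪x - ξ₀, ν⟫ := (hsub2 hxb).2
    set c : EuclideanSpace ℝ (Fin n) := x + ((5/8 : ℝ) * ρ) • ν with hc
    have hball : ball c ((3/8 : ℝ) * ρ) ⊆ Ω ∩ ball x ρ := by
      intro z hz
      rw [mem_ball, dist_eq_norm] at hz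
      have hcx : dist c x = (5/8 : ℝ) * ρ := by
        rw [dist_eq_norm, hc, add_sub_cancel_left, norm_smul, Real.norm_eq_abs,
          abs_of_nonneg (by linarith), hν, mul_one]
      have hzx : dist z x < ρ := by
        calc dist z x ≤ dist z c + dist c x := dist_triangle z c x
          _ < 3/8 * ρ + 5/8 * ρ := by
              rw [hcx]
              have : dist z c < 3/8 * ρ := by rwa [dist_eq_norm]
              linarith
          _ = ρ := by ring
      have hzΩ : z ∈ Ω := by
        refine (hsub1 ⟨?_, ?_⟩).1
        · rw [mem_ball]
          calc dist z ξ₀ ≤ dist z x + dist x ξ₀ := dist_triangle z x ξ₀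
            _ < ρ + ρ := add_lt_add hzx hdx
            _ = 2 * ρ := by ring
        · have hsplit : z - ξ₀ = (z - c) + (c - x) + (x - ξ₀) := by abel
          have hinner : ⟪z - ξ₀, ν⟫ = ⟪z - c, ν⟫ + ⟪c - x, ν⟫ + ⟪x - ξ₀, ν⟫ := by
            rw [hsplit, inner_add_left, inner_add_left]
          have hcxν : ⟪c - x, ν⟫ = (5/8 : ℝ) * ρ := by
            have h : c - x = ((5/8 : ℝ) * ρ) • ν := by rw [hc]; abel
            rw [h, real_inner_smul_left, real_inner_self_eq_norm_sq, hν]; ring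
          have hzcν : -((3/8:ℝ) * ρ) < ⟪z - c, ν⟫ := by
            have h1 : |⟪z - c, ν⟫| ≤ ‖z - c‖ * ‖ν‖ := abs_real_inner_le_norm _ _
            rw [hν, mul_one] at h1
            have := (abs_le.1 h1).1
            linarith
          show δ * (2 * ρ) < ⟪z - ξ₀, ν⟫
          rw [hinner, hcxν]
          nlinarith
      exact ⟨hzΩ, by rwa [mem_ball]⟩
    calc ENNReal.ofReal ((3/8 : ℝ)^n) * volume (ball (0 : EuclideanSpace ℝ (Fin n)) ρ)
        = volume (ball c ((3/8 : ℝ) * ρ)) := by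
          rw [Measure.addHaar_ball_mul_of_pos volume c (by norm_num : (0:ℝ) < 3/8) ρ,
            finrank_euclideanSpace_fin]
      _ ≤ volume (Ω ∩ ball x ρ) := measure_mono hball


open Metric in
/-- Vitali-type covering lemma on Reifenberg flat domains. -/
theorem covering_lemma_reifenberg (n : ℕ) (hn : 2 ≤ n) :
    ∃ δ₀ ∈ Set.Ioo (0 : ℝ) 1, ∃ C : ℝ, 0 < C ∧
      ∀ r₀ : ℝ, 0 < r₀ → ∀ δ ∈ Set.Ioc (0 : ℝ) δ₀,
      ∀ Ω : Set (EuclideanSpace ℝ (Fin n)), IsOpen Ω → Bornology.IsBounded Ω →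
        ReifenbergFlat Ω δ r₀ →
      ∀ ε ∈ Set.Ioo (0 : ℝ) 1, ∀ R ∈ Set.Ioc (0 : ℝ) (r₀ / 20),
      ∀ V W : Set (EuclideanSpace ℝ (Fin n)), MeasurableSet V → MeasurableSet W →
        V ⊆ W → W ⊆ Ω →
        volume V ≤ ENNReal.ofReal ε * volume (Metric.ball (0 : EuclideanSpace ℝ (Fin n)) R) →
        (∀ ξ ∈ Ω, ∀ ρ ∈ Set.Ioc (0 : ℝ) R,
          ENNReal.ofReal ε * volume (Metric.ball ξ ρ) < volume (V ∩ Metric.ball ξ ρ) →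
            Ω ∩ Metric.ball ξ ρ ⊆ W) →
        volume V ≤ ENNReal.ofReal (C * ε) * volume W := by
  classical
  haveI : NeZero n := ⟨by omega⟩
  refine ⟨1/16, ⟨by norm_num, by norm_num⟩, (40/3 : ℝ)^n, by positivity, ?_⟩
  intro r₀ hr₀ δ hδ Ω hΩo hΩb hRF ε hε R hR V W hVm hWm hVW hWΩ hVsmall hyp
  -- closed balls vs open balls
  have hsphV : ∀ (x : EuclideanSpace ℝ (Fin n)) (ρ : ℝ), ρ ≠ 0 →
      volume (V ∩ closedBall x ρ) = volume (V ∩ ball x ρ) := by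
    intro x ρ hρ
    apply le_antisymm
    · calc volume (V ∩ closedBall x ρ)
          ≤ volume ((V ∩ ball x ρ) ∪ sphere x ρ) := by
            apply measure_mono
            rw [← ball_union_sphere, Set.inter_union_distrib_left]
            exact Set.union_subset_union_right _ Set.inter_subset_right
        _ ≤ volume (V ∩ ball x ρ) + volume (sphere x ρ) := measure_union_le _ _
        _ = volume (V ∩ ball x ρ) := by
            rw [Measure.addHaar_sphere_of_ne_zero volume x hρ, add_zero]
    · exact measure_mono (Set.inter_subset_inter_right _ ball_subset_closedBall)
  have hcbb : ∀ (x : EuclideanSpace ℝ (Fin n)) (ρ : ℝ),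
      volume (closedBall x ρ) = volume (ball x ρ) :=
    fun x ρ => Measure.addHaar_closedBall_eq_addHaar_ball volume x ρ
  -- density points
  set good : Set (EuclideanSpace ℝ (Fin n)) :=
    {x | Filter.Tendsto (fun ρ => volume (V ∩ closedBall x ρ) / volume (closedBall x ρ))
      (nhdsWithin 0 (Set.Ioi 0)) (nhds 1)} with hgood_def
  have hnull : volume (V \ good) = 0 := by
    have h := Besicovitch.ae_tendsto_measure_inter_div_of_measurableSet volume hVm
    rw [Filter.eventually_iff, mem_ae_iff] at h
    apply measure_mono_null _ h
    intro x hx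
    simp only [Set.mem_compl_iff, Set.mem_setOf_eq]
    intro hten
    rw [Set.indicator_of_mem hx.1] at hten
    exact hx.2 hten
  -- the radius function
  set s : EuclideanSpace ℝ (Fin n) → Set ℝ := fun x =>
    {ρ | ρ ∈ Set.Ioc (0:ℝ) R ∧
      ENNReal.ofReal ε * volume (ball x ρ) < volume (V ∩ ball x ρ)} with hs_def
  set r : EuclideanSpace ℝ (Fin n) → ℝ := fun x => sSup (s x) with hr_def
  have hbdd : ∀ x, BddAbove (s x) := fun x => ⟨R, fun ρ hρ => hρ.1.2⟩
  have hsne : ∀ x ∈ V ∩ good, (s x).Nonempty := by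
    rintro x ⟨hxV, hxg⟩
    have h1 : ∀ᶠ ρ in nhdsWithin (0:ℝ) (Set.Ioi 0),
        ENNReal.ofReal ε < volume (V ∩ closedBall x ρ) / volume (closedBall x ρ) :=
      hxg.eventually_const_lt (ENNReal.ofReal_lt_one.2 hε.2)
    have h2 : Set.Ioo (0:ℝ) R ∈ nhdsWithin (0:ℝ) (Set.Ioi 0) :=
      Ioo_mem_nhdsGT_of_mem ⟨le_refl 0, hR.1⟩
    obtain ⟨ρ, hρ1, hρ2⟩ := (h1.and (Filter.eventually_of_mem h2 (fun y hy => hy))).exists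
    have hne0 : volume (closedBall x ρ) ≠ 0 :=
      ((measure_closedBall_pos volume x hρ2.1).ne')
    have hnetop : volume (closedBall x ρ) ≠ ⊤ := measure_closedBall_lt_top.ne
    rw [ENNReal.lt_div_iff_mul_lt (Or.inl hne0) (Or.inl hnetop)] at hρ1
    refine ⟨ρ, ⟨⟨hρ2.1, hρ2.2.le⟩, ?_⟩⟩
    rw [← hcbb x ρ, ← hsphV x ρ hρ2.1.ne']
    exact hρ1
  have hrpos : ∀ x ∈ V ∩ good, 0 < r x := by
    intro x hx
    obtain ⟨ρ, hρ⟩ := hsne x hx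
    exact lt_of_lt_of_le hρ.1.1 (le_csSup (hbdd x) hρ)
  have hrR : ∀ x ∈ V ∩ good, r x ≤ R := fun x hx =>
    csSup_le (hsne x hx) (fun ρ hρ => hρ.1.2)
  -- (b) the ball of radius r x is in W (intersected with Ω)
  have hΩW : ∀ x ∈ V ∩ good, Ω ∩ ball x (r x) ⊆ W := by
    rintro x hx z ⟨hzΩ, hzb⟩
    obtain ⟨ρ, hρs, hρgt⟩ := exists_lt_of_lt_csSup (hsne x hx) (mem_ball.1 hzb)
    exact hyp x (hWΩ (hVW hx.1)) ρ hρs.1 hρs.2 ⟨hzΩ, mem_ball.2 hρgt⟩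
  -- (a) density bound at scale 5 r x
  have h5 : ∀ x ∈ V ∩ good, volume (V ∩ closedBall x (5 * r x)) ≤
      ENNReal.ofReal ε * (ENNReal.ofReal ((5:ℝ)^n) * volume (ball (0 : EuclideanSpace ℝ (Fin n)) (r x))) := by
    intro x hx
    have hrx := hrpos x hx
    rw [hsphV x (5 * r x) (by positivity)]
    have hvol5 : volume (ball x (5 * r x)) =
        ENNReal.ofReal ((5:ℝ)^n) * volume (ball (0 : EuclideanSpace ℝ (Fin n)) (r x)) := by
      rw [Measure.addHaar_ball_mul_of_pos volume x (by norm_num : (0:ℝ) < 5) (r x),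
        finrank_euclideanSpace_fin]
    by_cases hcase : 5 * r x ≤ R
    · have hnot : 5 * r x ∉ s x := by
        intro hmem
        have h2 : 5 * r x ≤ r x := le_csSup (hbdd x) hmem
        nlinarith
      have hle : volume (V ∩ ball x (5 * r x)) ≤ ENNReal.ofReal ε * volume (ball x (5 * r x)) := by
        by_contra hcon
        push_neg at hcon
        exact hnot ⟨⟨by positivity, hcase⟩, hcon⟩
      rw [hvol5] at hle
      exact hle
    · push_neg at hcase
      calc volume (V ∩ ball x (5 * r x)) ≤ volume V := measure_mono Set.inter_subset_left
        _ ≤ ENNReal.ofReal ε * volume (ball (0 : EuclideanSpace ℝ (Fin n)) R) := hVsmall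
        _ ≤ ENNReal.ofReal ε * volume (ball (0 : EuclideanSpace ℝ (Fin n)) (5 * r x)) :=
            mul_le_mul_right (measure_mono (ball_subset_ball hcase.le)) _
        _ = ENNReal.ofReal ε * (ENNReal.ofReal ((5:ℝ)^n) * volume (ball (0 : EuclideanSpace ℝ (Fin n)) (r x))) := by
            rw [Measure.addHaar_ball_mul_of_pos volume _ (by norm_num : (0:ℝ) < 5) (r x),
              finrank_euclideanSpace_fin]
  -- (c) lower bound on the measure of W in the ball
  have hlow : ∀ x ∈ V ∩ good,
      ENNReal.ofReal ((3/8 : ℝ)^n) * volume (ball (0 : EuclideanSpace ℝ (Fin n)) (r x))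
        ≤ volume (W ∩ closedBall x (r x)) := by
    intro x hx
    have h1 : Ω ∩ ball x (r x) ⊆ W ∩ closedBall x (r x) := fun z hz =>
      ⟨hΩW x hx hz, ball_subset_closedBall hz.2⟩
    calc ENNReal.ofReal ((3/8 : ℝ)^n) * volume (ball (0 : EuclideanSpace ℝ (Fin n)) (r x))
        ≤ volume (Ω ∩ ball x (r x)) := by
          apply reifenberg_lower hΩo hRF (le_trans hδ.2 (le_refl _)) (hWΩ (hVW hx.1)) (hrpos x hx)
          have := hrR x hx
          linarith [hR.2]
      _ ≤ volume (W ∩ closedBall x (r x)) := measure_mono h1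
  -- Vitali covering
  obtain ⟨u, hut, hud, hcov⟩ := Vitali.exists_disjoint_subfamily_covering_enlargement_closedBall
    (V ∩ good) id r R (fun a ha => hrR a ha) 5 (by norm_num)
  simp only [id] at hud hcov
  have hVcov : V ∩ good ⊆ ⋃ b ∈ u, closedBall b (5 * r b) := by
    intro a ha
    obtain ⟨b, hbu, hsubb⟩ := hcov a ha
    exact Set.mem_biUnion hbu (hsubb (mem_closedBall_self (hrpos a ha).le))
  -- positivity of the disjoint pieces
  have hposu : ∀ b ∈ u, 0 < volume (V ∩ closedBall b (r b)) := by
    intro b hb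
    obtain ⟨ρ, hρ⟩ := hsne b (hut hb)
    have h1 : ball b ρ ⊆ closedBall b (r b) :=
      (ball_subset_ball (le_csSup (hbdd b) hρ)).trans ball_subset_closedBall
    calc (0 : ENNReal) ≤ ENNReal.ofReal ε * volume (ball b ρ) := zero_le
      _ < volume (V ∩ ball b ρ) := hρ.2
      _ ≤ volume (V ∩ closedBall b (r b)) := measure_mono (Set.inter_subset_inter_right _ h1)
  -- countability of u
  have hu_cnt : u.Countable := by
    have h := MeasureTheory.Measure.countable_meas_pos_of_disjoint_iUnion
      (μ := (volume : Measure (EuclideanSpace ℝ (Fin n))))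
      (As := fun b : u => V ∩ closedBall (b : EuclideanSpace ℝ (Fin n)) (r b))
      (fun b => hVm.inter measurableSet_closedBall)
      (fun b c hbc => Disjoint.mono Set.inter_subset_right Set.inter_subset_right
        (hud b.2 c.2 (Subtype.coe_injective.ne_iff.2 hbc)))
    have huniv : (Set.univ : Set u).Countable :=
      Set.Countable.mono (fun b _ => hposu b b.2) h
    exact Set.countable_coe_iff.mpr (Set.countable_univ_iff.mp huniv)
  -- per-ball estimate
  have hpow : (5:ℝ)^n * (8/3:ℝ)^n = (40/3:ℝ)^n := by rw [← mul_pow]; norm_num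
  have key : ∀ b ∈ u, volume (V ∩ closedBall b (5 * r b)) ≤
      ENNReal.ofReal ((40/3 : ℝ)^n * ε) * volume (W ∩ closedBall b (r b)) := by
    intro b hb
    have hbg := hut hb
    have hone : ENNReal.ofReal ((8/3 : ℝ)^n) * ENNReal.ofReal ((3/8 : ℝ)^n) = 1 := by
      rw [← ENNReal.ofReal_mul (by positivity), ← mul_pow]
      norm_num
    calc volume (V ∩ closedBall b (5 * r b))
        ≤ ENNReal.ofReal ε * (ENNReal.ofReal ((5:ℝ)^n) *
            volume (ball (0 : EuclideanSpace ℝ (Fin n)) (r b))) := h5 b hbg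
      _ = ENNReal.ofReal ε * ENNReal.ofReal ((5:ℝ)^n) * ENNReal.ofReal ((8/3:ℝ)^n) *
            (ENNReal.ofReal ((3/8:ℝ)^n) * volume (ball (0 : EuclideanSpace ℝ (Fin n)) (r b))) := by
          rw [mul_assoc (ENNReal.ofReal ε * ENNReal.ofReal ((5:ℝ)^n)),
            ← mul_assoc (ENNReal.ofReal ((8/3:ℝ)^n)), hone, one_mul, mul_assoc]
      _ ≤ ENNReal.ofReal ε * ENNReal.ofReal ((5:ℝ)^n) * ENNReal.ofReal ((8/3:ℝ)^n) *
            volume (W ∩ closedBall b (r b)) := mul_le_mul_right (hlow b hbg) _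
      _ = ENNReal.ofReal ((40/3 : ℝ)^n * ε) * volume (W ∩ closedBall b (r b)) := by
          rw [← ENNReal.ofReal_mul hε.1.le, ← ENNReal.ofReal_mul (mul_nonneg hε.1.le (by positivity))]
          congr 2
          rw [← hpow]; ring
  calc volume V ≤ volume (V ∩ good) + volume (V \ good) := measure_le_inter_add_diff volume V good
    _ = volume (V ∩ good) := by rw [hnull, add_zero]
    _ ≤ volume (⋃ b ∈ u, V ∩ closedBall b (5 * r b)) := by
        apply measure_mono
        intro a ha
        obtain ⟨b, hbu, hab⟩ := Set.mem_iUnion₂.1 (hVcov ha)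
        exact Set.mem_iUnion₂.2 ⟨b, hbu, ha.1, hab⟩
    _ ≤ ∑' b : u, volume (V ∩ closedBall (b : EuclideanSpace ℝ (Fin n)) (5 * r b)) :=
        measure_biUnion_le volume hu_cnt _
    _ ≤ ∑' b : u, ENNReal.ofReal ((40/3:ℝ)^n * ε) *
          volume (W ∩ closedBall (b : EuclideanSpace ℝ (Fin n)) (r b)) :=
        ENNReal.tsum_le_tsum (fun b => key b b.2)
    _ = ENNReal.ofReal ((40/3:ℝ)^n * ε) *
          ∑' b : u, volume (W ∩ closedBall (b : EuclideanSpace ℝ (Fin n)) (r b)) :=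
        ENNReal.tsum_mul_left
    _ ≤ ENNReal.ofReal ((40/3:ℝ)^n * ε) * volume W := by
        apply mul_le_mul_right
        calc ∑' b : u, volume (W ∩ closedBall (b : EuclideanSpace ℝ (Fin n)) (r b))
            ≤ volume (⋃ b : u, W ∩ closedBall (b : EuclideanSpace ℝ (Fin n)) (r b)) :=
              tsum_meas_le_meas_iUnion_of_disjoint volume
                (fun b => hWm.inter measurableSet_closedBall)
                (fun b c hbc => Disjoint.mono Set.inter_subset_right Set.inter_subset_right
                  (hud b.2 c.2 (Subtype.coe_injective.ne_iff.2 hbc)))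
          _ ≤ volume W := measure_mono (Set.iUnion_subset fun b => Set.inter_subset_left)
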